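/- Let u : EuclideanSpace ℝ (Fin 2) → ℝ be a twice continuously differentiable function (ContDiff ℝ 2 u) such that u(x) > 0 for every x and the Laplacian satisfies Δu(x) ≤ 0 for every x. Then u is constant. -/

import Mathlib

/-- The Laplacian of a function on the Euclidean plane: the trace of the second
derivative in the standard orthonormal basis. -/
noncomputable def planeLaplacian (u : EuclideanSpace ℝ (Fin 2) → ℝ)
    (x : EuclideanSpace ℝ (Fin 2)) : ℝ :=
  ∑ i : Fin 2,
    iteratedFDeriv ℝ 2 u x ![EuclideanSpace.single i 1, EuclideanSpace.single i 1]

noncomputable section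
open Real MeasureTheory intervalIntegral

abbrev E2 := EuclideanSpace ℝ (Fin 2)
def pv0 : E2 := EuclideanSpace.single 0 1
def pv1 : E2 := EuclideanSpace.single 1 1
def pe (θ : ℝ) : E2 := Real.cos θ • pv0 + Real.sin θ • pv1
def pe' (θ : ℝ) : E2 := (-Real.sin θ) • pv0 + Real.cos θ • pv1

lemma pe_apply (θ : ℝ) : pe θ 0 = Real.cos θ ∧ pe θ 1 = Real.sin θ := by
  constructor <;>
  simp [pe, pv0, pv1, PiLp.smul_apply, PiLp.add_apply, EuclideanSpace.single_apply]

lemma pe_norm (θ : ℝ) : ‖pe θ‖ = 1 := by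
  rw [EuclideanSpace.norm_eq]
  rw [show ∑ i : Fin 2, ‖pe θ i‖^2 = ‖pe θ 0‖^2 + ‖pe θ 1‖^2 from Fin.sum_univ_two _]
  rw [(pe_apply θ).1, (pe_apply θ).2]
  rw [Real.norm_eq_abs, Real.norm_eq_abs, sq_abs, sq_abs, Real.cos_sq_add_sin_sq]
  exact Real.sqrt_one

lemma hasDerivAt_pe (θ : ℝ) : HasDerivAt pe (pe' θ) θ := by
  exact ((Real.hasDerivAt_cos θ).smul_const pv0).add ((Real.hasDerivAt_sin θ).smul_const pv1)

lemma pe_periodic : pe π = pe (-π) := by simp [pe]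

variable (u : E2 → ℝ)

lemma trace_pe (z : E2) (θ : ℝ) :
    fderiv ℝ (fderiv ℝ u) z (pe θ) (pe θ) + fderiv ℝ (fderiv ℝ u) z (pe' θ) (pe' θ)
      = planeLaplacian u z := by
  simp only [planeLaplacian, Fin.sum_univ_two, iteratedFDeriv_two_apply, pe, pe',
    Matrix.cons_val_zero, Matrix.cons_val_one, Matrix.head_cons, map_add, _root_.map_smul,
    ContinuousLinearMap.add_apply, ContinuousLinearMap.coe_smul', Pi.smul_apply, smul_eq_mul]
  show _ = fderiv ℝ (fderiv ℝ u) z pv0 pv0 + fderiv ℝ (fderiv ℝ u) z pv1 pv1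
  linear_combination (((fderiv ℝ (fderiv ℝ u) z) pv0) pv0 + ((fderiv ℝ (fderiv ℝ u) z) pv1) pv1) * (Real.sin_sq_add_cos_sq θ)

lemma hasDerivAt_pe' (θ : ℝ) : HasDerivAt pe' (-pe θ) θ := by
  have h1 : HasDerivAt (fun t => (-Real.sin t) • pv0 + Real.cos t • pv1)
      ((-Real.cos θ) • pv0 + (-Real.sin θ) • pv1) θ :=
    (((Real.hasDerivAt_sin θ).neg).smul_const pv0).add ((Real.hasDerivAt_cos θ).smul_const pv1)
  convert h1 using 1
  · rfl
  · simp only [pe]; module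

lemma swap_helper {f : ℝ → ℝ → ℝ} (hf : Continuous (Function.uncurry f)) {a b c d : ℝ}
    (hab : a ≤ b) (hcd : c ≤ d) :
    ∫ r in a..b, ∫ θ in c..d, f r θ = ∫ θ in c..d, ∫ r in a..b, f r θ := by
  rw [intervalIntegral.integral_of_le hab, intervalIntegral.integral_of_le hcd]
  simp_rw [intervalIntegral.integral_of_le hcd, intervalIntegral.integral_of_le hab]
  apply MeasureTheory.integral_integral_swap
  rw [Measure.prod_restrict]
  apply MeasureTheory.IntegrableOn.mono_set (t := Set.Icc a b ×ˢ Set.Icc c d)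
  · exact hf.continuousOn.integrableOn_compact (isCompact_Icc.prod isCompact_Icc)
  · exact Set.prod_mono Set.Ioc_subset_Icc_self Set.Ioc_subset_Icc_self

section
variable {u : E2 → ℝ}

lemma hud (hu : ContDiff ℝ 2 u) : Differentiable ℝ u := hu.differentiable two_ne_zero
lemma hu1 (hu : ContDiff ℝ 2 u) : ContDiff ℝ 1 (fderiv ℝ u) := hu.fderiv_right (le_refl 2)
lemma hfd (hu : ContDiff ℝ 2 u) : Differentiable ℝ (fderiv ℝ u) := (hu1 hu).differentiable one_ne_zero
lemma hHc (hu : ContDiff ℝ 2 u) : Continuous (fderiv ℝ (fderiv ℝ u)) := (hu1 hu).continuous_fderiv one_ne_zero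
lemma hfc (hu : ContDiff ℝ 2 u) : Continuous (fderiv ℝ u) := hu.continuous_fderiv two_ne_zero

lemma path_hasDerivAt_r (x : E2) (θ r : ℝ) :
    HasDerivAt (fun s : ℝ => x + s • pe θ) (pe θ) r := by
  simpa using ((hasDerivAt_id r).smul_const (pe θ)).const_add x

lemma path_hasDerivAt_θ (x : E2) (r θ : ℝ) :
    HasDerivAt (fun t : ℝ => x + r • pe t) (r • pe' θ) θ := by
  exact (((hasDerivAt_pe θ).const_smul r)).const_add x

lemma L1 (hu : ContDiff ℝ 2 u) (x : E2) (θ r : ℝ) :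
    HasDerivAt (fun s : ℝ => u (x + s • pe θ)) (fderiv ℝ u (x + r • pe θ) (pe θ)) r :=
  ((hud hu (x + r • pe θ)).hasFDerivAt).comp_hasDerivAt r (path_hasDerivAt_r x θ r)

lemma L2a (hu : ContDiff ℝ 2 u) (x : E2) (θ r : ℝ) :
    HasDerivAt (fun s : ℝ => fderiv ℝ u (x + s • pe θ) (pe θ))
      (fderiv ℝ (fderiv ℝ u) (x + r • pe θ) (pe θ) (pe θ)) r := by
  have h1 : HasDerivAt (fun s : ℝ => fderiv ℝ u (x + s • pe θ))
      (fderiv ℝ (fderiv ℝ u) (x + r • pe θ) (pe θ)) r :=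
    ((hfd hu (x + r • pe θ)).hasFDerivAt).comp_hasDerivAt r (path_hasDerivAt_r x θ r)
  simpa using h1.clm_apply (hasDerivAt_const r (pe θ))

lemma L2 (hu : ContDiff ℝ 2 u) (x : E2) (θ r : ℝ) :
    HasDerivAt (fun s : ℝ => s * fderiv ℝ u (x + s • pe θ) (pe θ))
      (fderiv ℝ u (x + r • pe θ) (pe θ)
        + r * fderiv ℝ (fderiv ℝ u) (x + r • pe θ) (pe θ) (pe θ)) r := by
  simpa using (hasDerivAt_id' r).fun_mul (L2a hu x θ r)

lemma L3 (hu : ContDiff ℝ 2 u) (x : E2) (r θ : ℝ) :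
    HasDerivAt (fun t : ℝ => fderiv ℝ u (x + r • pe t) (r • pe' t))
      (r^2 * fderiv ℝ (fderiv ℝ u) (x + r • pe θ) (pe' θ) (pe' θ)
        - r * fderiv ℝ u (x + r • pe θ) (pe θ)) θ := by
  have hc : HasDerivAt (fun t : ℝ => fderiv ℝ u (x + r • pe t))
      (fderiv ℝ (fderiv ℝ u) (x + r • pe θ) (r • pe' θ)) θ :=
    ((hfd hu (x + r • pe θ)).hasFDerivAt).comp_hasDerivAt θ (path_hasDerivAt_θ x r θ)
  have hw : HasDerivAt (fun t : ℝ => r • pe' t) (r • (-pe θ)) θ :=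
    (hasDerivAt_pe' θ).const_smul r
  have := hc.clm_apply hw
  refine this.congr_deriv ?_
  simp [_root_.map_smul, smul_eq_mul]
  ring
end
section
open Real MeasureTheory intervalIntegral
variable {u : E2 → ℝ}

lemma pe'_periodic : pe' π = pe' (-π) := by simp [pe']

lemma cont_pe : Continuous pe := by
  exact (Real.continuous_cos.smul continuous_const).add (Real.continuous_sin.smul continuous_const)

lemma cont_pe' : Continuous pe' := by
  exact ((Real.continuous_sin.neg).smul continuous_const).add
    (Real.continuous_cos.smul continuous_const)

lemma cont_path (x : E2) : Continuous (fun p : ℝ × ℝ => x + p.1 • pe p.2) :=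
  continuous_const.add (continuous_fst.smul (cont_pe.comp continuous_snd))

lemma cont_F (hu : ContDiff ℝ 2 u) (x : E2) :
    Continuous (fun p : ℝ × ℝ => u (x + p.1 • pe p.2)) :=
  hu.continuous.comp (cont_path x)

lemma cont_Fr (hu : ContDiff ℝ 2 u) (x : E2) :
    Continuous (fun p : ℝ × ℝ => fderiv ℝ u (x + p.1 • pe p.2) (pe p.2)) :=
  ((hfc hu).comp (cont_path x)).clm_apply (cont_pe.comp continuous_snd)

lemma cont_Hee (hu : ContDiff ℝ 2 u) (x : E2) :
    Continuous (fun p : ℝ × ℝ =>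
      fderiv ℝ (fderiv ℝ u) (x + p.1 • pe p.2) (pe p.2) (pe p.2)) :=
  (((hHc hu).comp (cont_path x)).clm_apply (cont_pe.comp continuous_snd)).clm_apply
    (cont_pe.comp continuous_snd)

lemma cont_Hee' (hu : ContDiff ℝ 2 u) (x : E2) :
    Continuous (fun p : ℝ × ℝ =>
      fderiv ℝ (fderiv ℝ u) (x + p.1 • pe p.2) (pe' p.2) (pe' p.2)) :=
  (((hHc hu).comp (cont_path x)).clm_apply (cont_pe'.comp continuous_snd)).clm_apply
    (cont_pe'.comp continuous_snd)

lemma planeLaplacian_eq (u : E2 → ℝ) (z : E2) :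
    planeLaplacian u z
      = fderiv ℝ (fderiv ℝ u) z pv0 pv0 + fderiv ℝ (fderiv ℝ u) z pv1 pv1 := by
  simp [planeLaplacian, Fin.sum_univ_two, iteratedFDeriv_two_apply, pv0, pv1]

lemma cont_L (hu : ContDiff ℝ 2 u) : Continuous (planeLaplacian u) := by
  have : planeLaplacian u = fun z =>
      fderiv ℝ (fderiv ℝ u) z pv0 pv0 + fderiv ℝ (fderiv ℝ u) z pv1 pv1 :=
    funext (planeLaplacian_eq u)
  rw [this]
  exact (((hHc hu).clm_apply continuous_const).clm_apply continuous_const).add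
    (((hHc hu).clm_apply continuous_const).clm_apply continuous_const)

/-- circle average (times 2π). -/
noncomputable def Mf (u : E2 → ℝ) (x : E2) (r : ℝ) : ℝ := ∫ θ in (-π)..π, u (x + r • pe θ)

noncomputable def Nf (u : E2 → ℝ) (x : E2) (r : ℝ) : ℝ :=
  ∫ θ in (-π)..π, fderiv ℝ u (x + r • pe θ) (pe θ)

lemma comp_cont {α : Type*} [TopologicalSpace α] {g : ℝ × ℝ → α} (hg : Continuous g) (r : ℝ) :
    Continuous (fun θ : ℝ => g (r, θ)) :=
  hg.comp (continuous_const.prodMk continuous_id)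

lemma comp_cont' {α : Type*} [TopologicalSpace α] {g : ℝ × ℝ → α} (hg : Continuous g) (θ : ℝ) :
    Continuous (fun r : ℝ => g (r, θ)) :=
  hg.comp (continuous_id.prodMk continuous_const)

lemma C1 (hu : ContDiff ℝ 2 u) (x : E2) {a b : ℝ} (hab : a ≤ b) :
    Mf u x b - Mf u x a = ∫ r in a..b, Nf u x r := by
  have h1 : ∀ θ : ℝ, u (x + b • pe θ) - u (x + a • pe θ)
      = ∫ r in a..b, fderiv ℝ u (x + r • pe θ) (pe θ) := by
    intro θ
    exact (intervalIntegral.integral_eq_sub_of_hasDerivAt (fun r _ => L1 hu x θ r)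
      ((comp_cont' (cont_Fr hu x) θ).intervalIntegrable _ _)).symm
  have ib : IntervalIntegrable (fun θ => u (x + b • pe θ)) volume (-π) π :=
    (comp_cont (cont_F hu x) b).intervalIntegrable _ _
  have ia : IntervalIntegrable (fun θ => u (x + a • pe θ)) volume (-π) π :=
    (comp_cont (cont_F hu x) a).intervalIntegrable _ _
  have h2 : Mf u x b - Mf u x a
      = ∫ θ in (-π)..π, (u (x + b • pe θ) - u (x + a • pe θ)) := by
    rw [intervalIntegral.integral_sub ib ia]; rfl
  rw [h2]
  rw [intervalIntegral.integral_congr (fun θ _ => h1 θ)]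
  have hsw : Continuous (Function.uncurry
      (fun θ r : ℝ => fderiv ℝ u (x + r • pe θ) (pe θ))) :=
    (cont_Fr hu x).comp (continuous_snd.prodMk continuous_fst)
  have := swap_helper hsw (neg_le_self pi_pos.le) hab
  rw [this]
  rfl

lemma C2a (hu : ContDiff ℝ 2 u) (x : E2) {a b : ℝ} (hab : a ≤ b) :
    b * Nf u x b - a * Nf u x a
      = ∫ r in a..b, (∫ θ in (-π)..π,
          (fderiv ℝ u (x + r • pe θ) (pe θ)
            + r * fderiv ℝ (fderiv ℝ u) (x + r • pe θ) (pe θ) (pe θ))) := by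
  have hcont : Continuous (fun p : ℝ × ℝ =>
      fderiv ℝ u (x + p.1 • pe p.2) (pe p.2)
        + p.1 * fderiv ℝ (fderiv ℝ u) (x + p.1 • pe p.2) (pe p.2) (pe p.2)) :=
    (cont_Fr hu x).add (continuous_fst.mul (cont_Hee hu x))
  have h1 : ∀ θ : ℝ, b * fderiv ℝ u (x + b • pe θ) (pe θ)
      - a * fderiv ℝ u (x + a • pe θ) (pe θ)
      = ∫ r in a..b, (fderiv ℝ u (x + r • pe θ) (pe θ)
          + r * fderiv ℝ (fderiv ℝ u) (x + r • pe θ) (pe θ) (pe θ)) := by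
    intro θ
    exact (intervalIntegral.integral_eq_sub_of_hasDerivAt (fun r _ => L2 hu x θ r)
      ((comp_cont' hcont θ).intervalIntegrable _ _)).symm
  have ib : IntervalIntegrable (fun θ => b * fderiv ℝ u (x + b • pe θ) (pe θ)) volume (-π) π :=
    (continuous_const.mul (comp_cont (cont_Fr hu x) b)).intervalIntegrable _ _
  have ia : IntervalIntegrable (fun θ => a * fderiv ℝ u (x + a • pe θ) (pe θ)) volume (-π) π :=
    (continuous_const.mul (comp_cont (cont_Fr hu x) a)).intervalIntegrable _ _
  have h2 : b * Nf u x b - a * Nf u x a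
      = ∫ θ in (-π)..π, (b * fderiv ℝ u (x + b • pe θ) (pe θ)
          - a * fderiv ℝ u (x + a • pe θ) (pe θ)) := by
    rw [intervalIntegral.integral_sub ib ia]
    unfold Nf
    rw [← intervalIntegral.integral_const_mul, ← intervalIntegral.integral_const_mul]
  rw [h2, intervalIntegral.integral_congr (fun θ _ => h1 θ)]
  have hsw : Continuous (Function.uncurry
      (fun θ r : ℝ => fderiv ℝ u (x + r • pe θ) (pe θ)
        + r * fderiv ℝ (fderiv ℝ u) (x + r • pe θ) (pe θ) (pe θ))) :=
    hcont.comp (continuous_snd.prodMk continuous_fst)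
  exact swap_helper hsw (neg_le_self pi_pos.le) hab

lemma C2b (hu : ContDiff ℝ 2 u) (x : E2) (r : ℝ) :
    ∫ θ in (-π)..π,
      (r^2 * fderiv ℝ (fderiv ℝ u) (x + r • pe θ) (pe' θ) (pe' θ)
        - r * fderiv ℝ u (x + r • pe θ) (pe θ)) = 0 := by
  have hcont : Continuous (fun θ : ℝ =>
      r^2 * fderiv ℝ (fderiv ℝ u) (x + r • pe θ) (pe' θ) (pe' θ)
        - r * fderiv ℝ u (x + r • pe θ) (pe θ)) :=
    (continuous_const.mul (comp_cont (cont_Hee' hu x) r)).sub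
      (continuous_const.mul (comp_cont (cont_Fr hu x) r))
  rw [intervalIntegral.integral_eq_sub_of_hasDerivAt (fun θ _ => L3 hu x r θ)
    (hcont.intervalIntegrable _ _)]
  rw [pe_periodic, pe'_periodic, sub_self]

lemma C2c (hu : ContDiff ℝ 2 u) (hsuper : ∀ z, planeLaplacian u z ≤ 0) (x : E2)
    {r : ℝ} (hr : 0 < r) :
    (∫ θ in (-π)..π,
      (fderiv ℝ u (x + r • pe θ) (pe θ)
        + r * fderiv ℝ (fderiv ℝ u) (x + r • pe θ) (pe θ) (pe θ))) ≤ 0 := by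
  have key : r * (∫ θ in (-π)..π,
      (fderiv ℝ u (x + r • pe θ) (pe θ)
        + r * fderiv ℝ (fderiv ℝ u) (x + r • pe θ) (pe θ) (pe θ)))
      = r^2 * ∫ θ in (-π)..π, planeLaplacian u (x + r • pe θ) := by
    rw [← intervalIntegral.integral_const_mul, ← intervalIntegral.integral_const_mul]
    have hint : ∀ θ : ℝ, r * (fderiv ℝ u (x + r • pe θ) (pe θ)
        + r * fderiv ℝ (fderiv ℝ u) (x + r • pe θ) (pe θ) (pe θ))
        = r^2 * planeLaplacian u (x + r • pe θ)
          - (r^2 * fderiv ℝ (fderiv ℝ u) (x + r • pe θ) (pe' θ) (pe' θ)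
            - r * fderiv ℝ u (x + r • pe θ) (pe θ)) := by
      intro θ
      have := trace_pe u (x + r • pe θ) θ
      nlinarith [this]
    rw [intervalIntegral.integral_congr (fun θ _ => hint θ)]
    have iL : IntervalIntegrable (fun θ => r^2 * planeLaplacian u (x + r • pe θ))
        volume (-π) π := by
      apply Continuous.intervalIntegrable
      exact continuous_const.mul ((cont_L hu).comp (comp_cont (cont_path x) r))
    have iR : IntervalIntegrable (fun θ =>
        r^2 * fderiv ℝ (fderiv ℝ u) (x + r • pe θ) (pe' θ) (pe' θ)
          - r * fderiv ℝ u (x + r • pe θ) (pe θ)) volume (-π) π :=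
      ((continuous_const.mul (comp_cont (cont_Hee' hu x) r)).sub
        (continuous_const.mul (comp_cont (cont_Fr hu x) r))).intervalIntegrable _ _
    rw [intervalIntegral.integral_sub iL iR]
    rw [C2b hu x r, sub_zero]
  have hLneg : (∫ θ in (-π)..π, planeLaplacian u (x + r • pe θ)) ≤ 0 := by
    rw [← neg_nonneg, ← intervalIntegral.integral_neg]
    exact intervalIntegral.integral_nonneg (by linarith [pi_pos])
      (fun θ _ => by linarith [hsuper (x + r • pe θ)])
  nlinarith [key, hLneg, sq_nonneg r, mul_pos hr hr]
end
section
open Real MeasureTheory intervalIntegral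
variable {u : E2 → ℝ}

lemma cont_Nf (hu : ContDiff ℝ 2 u) (x : E2) : Continuous (Nf u x) := by
  apply intervalIntegral.continuous_parametric_intervalIntegral_of_continuous'
  exact (cont_Fr hu x : Continuous
    (Function.uncurry fun r θ : ℝ => fderiv ℝ u (x + r • pe θ) (pe θ)))

lemma Mf_nonneg (hpos : ∀ z, 0 < u z) (x : E2) (r : ℝ) : 0 ≤ Mf u x r :=
  intervalIntegral.integral_nonneg (by linarith [pi_pos]) (fun θ _ => (hpos _).le)

lemma Nf_nonpos_step (hu : ContDiff ℝ 2 u) (hsuper : ∀ z, planeLaplacian u z ≤ 0) (x : E2)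
    {a b : ℝ} (ha : 0 < a) (hab : a ≤ b) :
    b * Nf u x b ≤ a * Nf u x a := by
  have hid := C2a hu x hab
  have hle : ∀ r ∈ Set.Icc a b, (∫ θ in (-π)..π,
      (fderiv ℝ u (x + r • pe θ) (pe θ)
        + r * fderiv ℝ (fderiv ℝ u) (x + r • pe θ) (pe θ) (pe θ))) ≤ 0 :=
    fun r hr => C2c hu hsuper x (lt_of_lt_of_le ha hr.1)
  have h2 : 0 ≤ ∫ r in a..b, -(∫ θ in (-π)..π,
      (fderiv ℝ u (x + r • pe θ) (pe θ)
        + r * fderiv ℝ (fderiv ℝ u) (x + r • pe θ) (pe θ) (pe θ))) :=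
    intervalIntegral.integral_nonneg hab (fun r hr => neg_nonneg.mpr (hle r hr))
  rw [intervalIntegral.integral_neg] at h2
  linarith

lemma Nf_bound (hu : ContDiff ℝ 2 u) (x : E2) :
    ∃ K : ℝ, 0 ≤ K ∧ ∀ a : ℝ, 0 < a → a ≤ 1 → Nf u x a ≤ K := by
  obtain ⟨C, hC⟩ := (isCompact_closedBall x 1).exists_bound_of_continuousOn
    ((hfc hu).continuousOn (s := Metric.closedBall x 1))
  refine ⟨C * (2 * π), ?_, ?_⟩
  · have h0 : (0:ℝ) ≤ C := le_trans (norm_nonneg _) (hC x (Metric.mem_closedBall_self zero_le_one))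
    positivity
  · intro a ha ha1
    have hb : ∀ θ ∈ Set.uIoc (-π) π, ‖fderiv ℝ u (x + a • pe θ) (pe θ)‖ ≤ C := by
      intro θ _
      have hmem : x + a • pe θ ∈ Metric.closedBall x 1 := by
        rw [Metric.mem_closedBall]
        have : dist (x + a • pe θ) x = ‖a • pe θ‖ := by
          rw [dist_eq_norm]; congr 1; abel
        rw [this, norm_smul, pe_norm, Real.norm_eq_abs, abs_of_pos ha]
        simpa using ha1
      calc ‖fderiv ℝ u (x + a • pe θ) (pe θ)‖
          ≤ ‖fderiv ℝ u (x + a • pe θ)‖ * ‖pe θ‖ := ContinuousLinearMap.le_opNorm _ _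
        _ ≤ C := by rw [pe_norm, mul_one]; exact hC _ hmem
    have := intervalIntegral.norm_integral_le_of_norm_le_const hb
    have habs : |π - (-π)| = 2 * π := by rw [abs_of_pos (by linarith [pi_pos])]; ring
    rw [habs] at this
    calc Nf u x a ≤ |Nf u x a| := le_abs_self _
      _ ≤ C * (2 * π) := by rw [← Real.norm_eq_abs]; exact this

lemma psi_nonpos (hu : ContDiff ℝ 2 u) (hsuper : ∀ z, planeLaplacian u z ≤ 0) (x : E2)
    {r : ℝ} (hr : 0 < r) : r * Nf u x r ≤ 0 := by
  obtain ⟨K, hK0, hK⟩ := Nf_bound hu x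
  have key : ∀ ε : ℝ, 0 < ε → r * Nf u x r ≤ 0 + ε := by
    intro ε hε
    set a := min r (min 1 (ε / (K + 1))) with ha_def
    have ha : 0 < a := lt_min hr (lt_min one_pos (div_pos hε (by linarith)))
    have ha1 : a ≤ 1 := le_trans (min_le_right _ _) (min_le_left _ _)
    have haε : a ≤ ε / (K + 1) := le_trans (min_le_right _ _) (min_le_right _ _)
    have h1 : r * Nf u x r ≤ a * Nf u x a := Nf_nonpos_step hu hsuper x ha (min_le_left _ _)
    have h2 : a * Nf u x a ≤ a * K := mul_le_mul_of_nonneg_left (hK a ha ha1) ha.le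
    have h3 : a * K ≤ (ε / (K + 1)) * K := mul_le_mul_of_nonneg_right haε hK0
    have h4 : (ε / (K + 1)) * K ≤ ε := by
      rw [div_mul_eq_mul_div, div_le_iff₀ (by linarith)]
      nlinarith
    linarith
  linarith [le_of_forall_pos_le_add key]

lemma Nf_zero (hu : ContDiff ℝ 2 u) (hpos : ∀ z, 0 < u z)
    (hsuper : ∀ z, planeLaplacian u z ≤ 0) (x : E2) {r : ℝ} (hr : 0 < r) :
    Nf u x r = 0 := by
  have hle : Nf u x r ≤ 0 := by nlinarith [psi_nonpos hu hsuper x hr]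
  by_contra hne
  have hlt : Nf u x r < 0 := lt_of_le_of_ne hle hne
  set c := r * Nf u x r with hc_def
  have hcneg : c < 0 := mul_neg_of_pos_of_neg hr hlt
  have hstep : ∀ b, r ≤ b → Nf u x b ≤ c / b := by
    intro b hb
    have hbpos : 0 < b := lt_of_lt_of_le hr hb
    have h1 : b * Nf u x b ≤ c := Nf_nonpos_step hu hsuper x hr hb
    rw [le_div_iff₀ hbpos]; linarith [h1]
  set T := (Mf u x r + 1) / (-c) with hT_def
  have hT : 0 < T := div_pos (by linarith [Mf_nonneg hpos x r]) (neg_pos.mpr hcneg)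
  set b := r * Real.exp T with hb_def
  have hrb : r ≤ b := by
    rw [hb_def]
    nlinarith [Real.one_le_exp hT.le]
  have hbpos : 0 < b := lt_of_lt_of_le hr hrb
  have hC1 : Mf u x b - Mf u x r = ∫ s in r..b, Nf u x s := C1 hu x hrb
  have hdivint : IntervalIntegrable (fun s : ℝ => c / s) volume r b := by
    apply ContinuousOn.intervalIntegrable
    apply ContinuousOn.div continuousOn_const continuousOn_id
    intro s hs
    rw [Set.uIcc_of_le hrb] at hs
    exact ne_of_gt (lt_of_lt_of_le hr hs.1)
  have hcomp : (∫ s in r..b, Nf u x s) ≤ ∫ s in r..b, c / s :=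
    intervalIntegral.integral_mono_on hrb ((cont_Nf hu x).intervalIntegrable _ _)
      hdivint (fun s hs => hstep s hs.1)
  have hlog : (∫ s in r..b, c / s) = c * Real.log (b / r) := by
    simp_rw [div_eq_mul_inv]
    rw [intervalIntegral.integral_const_mul, integral_inv_of_pos hr hbpos, div_eq_mul_inv]
  have hbr : b / r = Real.exp T := by
    rw [hb_def]; field_simp
  clear_value c T b
  have hcT : c * Real.log (b / r) = -(Mf u x r + 1) := by
    rw [hbr, Real.log_exp, hT_def]
    have hcne : c ≠ 0 := ne_of_lt hcneg
    rw [div_neg, mul_neg, mul_div_cancel₀ _ hcne]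
  have hMb := Mf_nonneg hpos x b
  linarith

lemma circleMVP (hu : ContDiff ℝ 2 u) (hpos : ∀ z, 0 < u z)
    (hsuper : ∀ z, planeLaplacian u z ≤ 0) (x : E2) {r : ℝ} (hr : 0 ≤ r) :
    Mf u x r = 2 * π * u x := by
  have h0 : Mf u x 0 = 2 * π * u x := by
    unfold Mf
    simp only [zero_smul, add_zero]
    rw [intervalIntegral.integral_const]
    rw [smul_eq_mul]
    ring
  have hC1 := C1 hu x hr
  have hz : (∫ s in (0:ℝ)..r, Nf u x s) = 0 := by
    rw [intervalIntegral.integral_of_le hr]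
    rw [MeasureTheory.setIntegral_congr_fun measurableSet_Ioc
      (fun s hs => Nf_zero hu hpos hsuper x hs.1)]
    simp
  linarith
end
section
open Real MeasureTheory intervalIntegral Set

noncomputable def φME : ℝ × ℝ ≃ᵐ E2 :=
  (MeasurableEquiv.finTwoArrow.symm).trans (MeasurableEquiv.toLp 2 (Fin 2 → ℝ))

noncomputable def φeq : ℝ × ℝ → E2 := ⇑φME

lemma φeq_mp : MeasurePreserving φeq volume volume := by
  show MeasurePreserving (⇑(MeasurableEquiv.toLp 2 (Fin 2 → ℝ)) ∘ ⇑MeasurableEquiv.finTwoArrow.symm) volume volume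
  have h1 := (EuclideanSpace.volume_preserving_symm_measurableEquiv_toLp (Fin 2)).symm
  have h2 := (measurePreserving_finTwoArrow (volume : Measure ℝ)).symm
  rw [← volume_pi] at h2
  exact h1.comp h2

lemma φeq_polar (r θ : ℝ) : φeq (r * Real.cos θ, r * Real.sin θ) = r • pe θ := by
  ext i
  fin_cases i <;>
  simp [φeq, φME, MeasurableEquiv.coe_toLp, MeasurableEquiv.finTwoArrow,
    pe, pv0, pv1, EuclideanSpace.single_apply]

variable {u : E2 → ℝ}

lemma integrableOn_ball (hu : ContDiff ℝ 2 u) (y : E2) (R : ℝ) :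
    IntegrableOn u (Metric.ball y R) volume := by
  exact (hu.continuous.continuousOn.integrableOn_compact
    (isCompact_closedBall y R)).mono_set Metric.ball_subset_closedBall

lemma ballMVP (hu : ContDiff ℝ 2 u) (hpos : ∀ z, 0 < u z)
    (hsuper : ∀ z, planeLaplacian u z ≤ 0) (x : E2) {R : ℝ} (hR : 0 < R) :
    ∫ z in Metric.ball x R, u z = π * R^2 * u x := by
  -- translate to a ball centered at the origin
  have step1 : (∫ z in Metric.ball x R, u z)
      = ∫ w, (Metric.ball (0:E2) R).indicator (fun w => u (x + w)) w := by
    rw [← MeasureTheory.integral_indicator Metric.isOpen_ball.measurableSet]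
    rw [← integral_add_left_eq_self ((Metric.ball x R).indicator u) x]
    congr 1
    funext w
    have hiff : x + w ∈ Metric.ball x R ↔ w ∈ Metric.ball (0:E2) R := by
      rw [Metric.mem_ball, Metric.mem_ball, dist_eq_norm, dist_eq_norm,
        show x + w - x = w - 0 by abel]
    by_cases hw : w ∈ Metric.ball (0:E2) R
    · rw [Set.indicator_of_mem (hiff.mpr hw), Set.indicator_of_mem hw]
    · rw [Set.indicator_of_notMem (fun h => hw (hiff.mp h)), Set.indicator_of_notMem hw]
  -- move to ℝ × ℝ
  have step2 : (∫ w, (Metric.ball (0:E2) R).indicator (fun w => u (x + w)) w)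
      = ∫ p : ℝ × ℝ, (Metric.ball (0:E2) R).indicator (fun w => u (x + w)) (φeq p) :=
    (φeq_mp.integral_comp (φME.measurableEmbedding)
      ((Metric.ball (0:E2) R).indicator (fun w => u (x + w)))).symm
  -- polar coordinates
  have step3 : (∫ p : ℝ × ℝ, (Metric.ball (0:E2) R).indicator (fun w => u (x + w)) (φeq p))
      = ∫ p in polarCoord.target,
          p.1 • (Metric.ball (0:E2) R).indicator (fun w => u (x + w)) (φeq (polarCoord.symm p)) :=
    (integral_comp_polarCoord_symm _).symm
  -- rewrite the integrand on the target
  have hTmeas : MeasurableSet polarCoord.target :=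
    (measurableSet_Ioi.prod measurableSet_Ioo)
  have step4 : (∫ p in polarCoord.target,
        p.1 • (Metric.ball (0:E2) R).indicator (fun w => u (x + w)) (φeq (polarCoord.symm p)))
      = ∫ p in polarCoord.target,
          (Set.Ioo (0:ℝ) R).indicator (fun r => r * u (x + r • pe p.2)) p.1 := by
    apply setIntegral_congr_fun hTmeas
    intro p hp
    obtain ⟨hp1, hp2⟩ := hp
    dsimp only
    have hp1' : (0:ℝ) < p.1 := hp1
    have hsymm : polarCoord.symm p = (p.1 * Real.cos p.2, p.1 * Real.sin p.2) := rfl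
    rw [hsymm, φeq_polar]
    have hnorm : ‖p.1 • pe p.2‖ = p.1 := by
      rw [norm_smul, pe_norm, Real.norm_eq_abs, abs_of_pos hp1', mul_one]
    by_cases hcase : p.1 < R
    · rw [Set.indicator_of_mem (by simpa [Metric.mem_ball, dist_eq_norm, hnorm] using hcase),
        Set.indicator_of_mem (Set.mem_Ioo.mpr ⟨hp1', hcase⟩), smul_eq_mul]
    · rw [Set.indicator_of_notMem (by simpa [Metric.mem_ball, dist_eq_norm, hnorm] using hcase),
        Set.indicator_of_notMem (fun h => hcase (Set.mem_Ioo.mp h).2), smul_zero]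
  -- split as iterated integral
  have hKcont : Continuous (fun p : ℝ × ℝ => p.1 * u (x + p.1 • pe p.2)) :=
    continuous_fst.mul (cont_F hu x)
  have hInt : IntegrableOn
      (fun p : ℝ × ℝ => (Set.Ioo (0:ℝ) R).indicator (fun r => r * u (x + r • pe p.2)) p.1)
      polarCoord.target volume := by
    have heq : ∀ p : ℝ × ℝ,
        (Set.Ioo (0:ℝ) R).indicator (fun r => r * u (x + r • pe p.2)) p.1
          = (Set.Ioo (0:ℝ) R ×ˢ (Set.univ : Set ℝ)).indicator
              (fun q : ℝ × ℝ => q.1 * u (x + q.1 • pe q.2)) p := by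
      intro p
      by_cases hc : p.1 ∈ Set.Ioo (0:ℝ) R
      · rw [Set.indicator_of_mem hc, Set.indicator_of_mem (Set.mem_prod.mpr ⟨hc, Set.mem_univ _⟩)]
      · rw [Set.indicator_of_notMem hc,
          Set.indicator_of_notMem (fun h => hc (Set.mem_prod.mp h).1)]
    simp_rw [heq]
    rw [IntegrableOn, integrable_indicator_iff (measurableSet_Ioo.prod MeasurableSet.univ),
      IntegrableOn, Measure.restrict_restrict (measurableSet_Ioo.prod MeasurableSet.univ)]
    have hsub : (Set.Ioo (0:ℝ) R ×ˢ (Set.univ : Set ℝ)) ∩ polarCoord.target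
        ⊆ Set.Icc 0 R ×ˢ Set.Icc (-π-1) (π+1) := by
      rintro ⟨r, θ⟩ ⟨⟨hr, -⟩, -, hθ⟩
      exact ⟨⟨hr.1.le, hr.2.le⟩, ⟨by linarith [hθ.1], by linarith [hθ.2]⟩⟩
    exact ((hKcont.continuousOn.integrableOn_compact (μ := volume)
      (isCompact_Icc.prod isCompact_Icc)).mono_set hsub : IntegrableOn _ _ _)
  have step5 : (∫ p in polarCoord.target,
        (Set.Ioo (0:ℝ) R).indicator (fun r => r * u (x + r • pe p.2)) p.1)
      = ∫ r in Set.Ioi (0:ℝ), (∫ θ in Set.Ioo (-π) π,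
          (Set.Ioo (0:ℝ) R).indicator (fun s => s * u (x + s • pe θ)) r) := by
    rw [show polarCoord.target = Set.Ioi (0:ℝ) ×ˢ Set.Ioo (-π) π from rfl]
    exact MeasureTheory.setIntegral_prod _ hInt
  have step6 : ∀ r ∈ Set.Ioi (0:ℝ),
      (∫ θ in Set.Ioo (-π) π,
          (Set.Ioo (0:ℝ) R).indicator (fun s => s * u (x + s • pe θ)) r)
        = (Set.Ioo (0:ℝ) R).indicator (fun s => s * (2 * π * u x)) r := by
    intro r hr
    by_cases hcase : r ∈ Set.Ioo (0:ℝ) R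
    · rw [Set.indicator_of_mem hcase]
      have h1 : ∀ θ : ℝ, (Set.Ioo (0:ℝ) R).indicator (fun s => s * u (x + s • pe θ)) r
          = r * u (x + r • pe θ) := fun θ => Set.indicator_of_mem hcase _
      simp_rw [h1]
      rw [MeasureTheory.integral_const_mul]
      have h2 : (∫ θ in Set.Ioo (-π) π, u (x + r • pe θ)) = Mf u x r := by
        rw [← MeasureTheory.integral_Ioc_eq_integral_Ioo]
        rw [Mf, intervalIntegral.integral_of_le (by linarith [pi_pos])]
      rw [h2, circleMVP hu hpos hsuper x (le_of_lt hcase.1)]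
    · rw [Set.indicator_of_notMem hcase]
      have h1 : ∀ θ : ℝ, (Set.Ioo (0:ℝ) R).indicator (fun s => s * u (x + s • pe θ)) r
          = 0 := fun θ => Set.indicator_of_notMem hcase _
      simp_rw [h1]
      simp
  have step7 : (∫ r in Set.Ioi (0:ℝ),
        (Set.Ioo (0:ℝ) R).indicator (fun s => s * (2 * π * u x)) r)
      = π * R^2 * u x := by
    rw [MeasureTheory.setIntegral_indicator measurableSet_Ioo]
    rw [Set.inter_eq_right.mpr (fun s hs => hs.1)]
    have h3 : (∫ r in Set.Ioo (0:ℝ) R, r * (2 * π * u x))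
        = (∫ r in Set.Ioo (0:ℝ) R, r) * (2 * π * u x) := by
      rw [← MeasureTheory.integral_mul_const]
    rw [h3]
    have h4 : (∫ r in Set.Ioo (0:ℝ) R, r) = R^2 / 2 := by
      rw [← MeasureTheory.integral_Ioc_eq_integral_Ioo,
        ← intervalIntegral.integral_of_le hR.le, integral_id]
      ring
    rw [h4]
    ring
  rw [step1, step2, step3, step4, step5,
    MeasureTheory.setIntegral_congr_fun measurableSet_Ioi step6, step7]
end

section
open Real MeasureTheory Filter
variable {u : E2 → ℝ}

lemma final_le (hu : ContDiff ℝ 2 u) (hpos : ∀ z, 0 < u z)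
    (hsuper : ∀ z, planeLaplacian u z ≤ 0) (x y : E2) : u x ≤ u y := by
  set d := dist x y with hd
  have hd0 : 0 ≤ d := dist_nonneg
  have hineq : ∀ R : ℝ, 0 < R → R^2 * u x ≤ (R + d)^2 * u y := by
    intro R hR
    have h1 : π * R^2 * u x = ∫ z in Metric.ball x R, u z :=
      (ballMVP hu hpos hsuper x hR).symm
    have h2 : (∫ z in Metric.ball y (R + d), u z) = π * (R + d)^2 * u y :=
      ballMVP hu hpos hsuper y (by linarith)
    have hsub : Metric.ball x R ⊆ Metric.ball y (R + d) :=
      Metric.ball_subset_ball' (by rw [hd])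
    have hmono : (∫ z in Metric.ball x R, u z) ≤ ∫ z in Metric.ball y (R + d), u z :=
      MeasureTheory.setIntegral_mono_set (integrableOn_ball hu y (R + d))
        (Filter.Eventually.of_forall (fun z => (hpos z).le))
        (HasSubset.Subset.eventuallyLE hsub)
    nlinarith [pi_pos]
  have hlim : Tendsto (fun R : ℝ => (1 + d * R⁻¹)^2 * u y) atTop (nhds (u y)) := by
    have h0 : Tendsto (fun R : ℝ => 1 + d * R⁻¹) atTop (nhds 1) := by
      have := (tendsto_inv_atTop_zero (𝕜 := ℝ)).const_mul d
      simpa using tendsto_const_nhds.add this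
    have := (h0.pow 2).mul_const (u y)
    simpa using this
  apply ge_of_tendsto hlim
  filter_upwards [Filter.eventually_gt_atTop 0] with R hR
  have hkey := hineq R hR
  have hRne : R ≠ 0 := ne_of_gt hR
  have hexp : (1 + d * R⁻¹)^2 * u y = ((R + d)^2 * u y) / R^2 := by
    field_simp
  rw [hexp, le_div_iff₀ (by positivity)]
  nlinarith [hkey]
end

end

/-- Lemma 4.2 (smooth case): a positive `C²` superharmonic function on the plane
is constant. -/
theorem positive_superharmonic_constant (u : EuclideanSpace ℝ (Fin 2) → ℝ)
    (hu : ContDiff ℝ 2 u) (hpos : ∀ x, 0 < u x)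
    (hsuper : ∀ x, planeLaplacian u x ≤ 0) :
    ∀ x y, u x = u y := by
  intro x y
  exact le_antisymm (final_le hu hpos hsuper x y) (final_le hu hpos hsuper y x)
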